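/- Every $m$-point $k$-increasing metric space contains, isometrically, either an equilateral subspace with at least $\sqrt{m}$ points or a $k$-lacunary subspace with at least $\sqrt{m}$ points. -/

import Mathlib

/-- Longest common prefix of two paths (= least common ancestor of leaves of a rooted
tree encoded as lists of child indices). -/
def lcp : List ℕ → List ℕ → List ℕ
  | a :: as, b :: bs => if a = b then a :: lcp as bs else []
  | _, _ => []

lemma lcp_append (p : List ℕ) : ∀ s t : List ℕ, lcp (p ++ s) (p ++ t) = p ++ lcp s t := by
  induction p with
  | nil => intro s t; simp
  | cons a p ih => intro s t; simp [lcp, ih]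

lemma lcp_cons_ne {a b : ℕ} (s t : List ℕ) (h : a ≠ b) : lcp (a :: s) (b :: t) = [] := by
  simp [lcp, h]

section
variable {k : ℝ} {T : Finset (List ℕ)} {Δ : List ℕ → ℝ}

/-- uniqueness of internal vertices at each level -/
lemma uniq_internal
    (hpref : ∀ v ∈ T, ∀ u : List ℕ, u <+: v → u ∈ T)
    (hincr : ∀ v ∈ T, ∀ i j : ℕ, v ++ [i] ∈ T → v ++ [j] ∈ T →
      (∃ i' : ℕ, v ++ [i] ++ [i'] ∈ T) → (∃ j' : ℕ, v ++ [j] ++ [j'] ∈ T) → i = j) :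
    ∀ (n : ℕ) (u v : List ℕ), u ∈ T → v ∈ T → (∃ i, u ++ [i] ∈ T) → (∃ j, v ++ [j] ∈ T) →
      u.length = n → v.length = n → u = v := by
  intro n
  induction n with
  | zero =>
    intro u v _ _ _ _ hu hv
    rw [List.length_eq_zero_iff] at hu hv; rw [hu, hv]
  | succ n ih =>
    intro u v huT hvT hiu hiv hu hv
    have hune : u ≠ [] := by intro h; rw [h] at hu; simp at hu
    have hvne : v ≠ [] := by intro h; rw [h] at hv; simp at hv
    have hudl : u.dropLast ++ [u.getLast hune] = u := List.dropLast_append_getLast hune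
    have hvdl : v.dropLast ++ [v.getLast hvne] = v := List.dropLast_append_getLast hvne
    have hpu : u.dropLast ∈ T := hpref u huT _ ⟨[u.getLast hune], hudl⟩
    have hpv : v.dropLast ∈ T := hpref v hvT _ ⟨[v.getLast hvne], hvdl⟩
    have hp : u.dropLast = v.dropLast := by
      apply ih _ _ hpu hpv ⟨u.getLast hune, by rw [hudl]; exact huT⟩
        ⟨v.getLast hvne, by rw [hvdl]; exact hvT⟩ <;>
        simp [List.length_dropLast, hu, hv]
    have := hincr u.dropLast hpu (u.getLast hune) (v.getLast hvne)
      (by rw [hudl]; exact huT) (by rw [hp, hvdl]; exact hvT)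
      (by rw [hudl]; exact hiu) (by rw [hp, hvdl]; exact hiv)
    rw [← hudl, ← hvdl, ← hp, this]

lemma internal_prefix
    (hpref : ∀ v ∈ T, ∀ u : List ℕ, u <+: v → u ∈ T)
    (hincr : ∀ v ∈ T, ∀ i j : ℕ, v ++ [i] ∈ T → v ++ [j] ∈ T →
      (∃ i' : ℕ, v ++ [i] ++ [i'] ∈ T) → (∃ j' : ℕ, v ++ [j] ++ [j'] ∈ T) → i = j)
    {u v : List ℕ} (huT : u ∈ T) (hvT : v ∈ T)
    (hiu : ∃ i, u ++ [i] ∈ T) (hiv : ∃ j, v ++ [j] ∈ T)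
    (hlen : u.length ≤ v.length) : u <+: v := by
  rcases eq_or_lt_of_le hlen with heq | hlt
  · exact (uniq_internal hpref hincr u.length u v huT hvT hiu hiv rfl heq.symm) ▸ List.prefix_refl u
  · set w := v.take u.length with hw
    have hwpre : w <+: v := List.take_prefix _ _
    have hwT : w ∈ T := hpref v hvT w hwpre
    have hlw : u.length < v.length := hlt
    have hchild : w ++ [v.get ⟨u.length, hlw⟩] = v.take (u.length + 1) := by
      rw [hw, ← List.take_concat_get hlw]; simp [List.concat_eq_append]
    have hiw : ∃ i, w ++ [i] ∈ T := by
      exact ⟨v.get ⟨u.length, hlw⟩, by rw [hchild]; exact hpref v hvT _ (List.take_prefix _ _)⟩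
    have : u = w := uniq_internal hpref hincr u.length u w huT hwT hiu hiw rfl
      (by simp [hw, le_of_lt hlw])
    rw [this]; exact hwpre

lemma delta_mono (hk : 1 ≤ k)
    (hpref : ∀ v ∈ T, ∀ u : List ℕ, u <+: v → u ∈ T)
    (hΔpos : ∀ v ∈ T, 0 ≤ Δ v)
    (hHST : ∀ v ∈ T, ∀ i : ℕ, v ++ [i] ∈ T → Δ (v ++ [i]) ≤ Δ v / k) :
    ∀ (n : ℕ) (v : List ℕ), v ∈ T → v.length = n → ∀ u, u <+: v → Δ v ≤ Δ u := by
  intro n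
  induction n with
  | zero =>
    intro v hvT hv u hu
    rw [List.length_eq_zero_iff] at hv
    subst hv
    rw [List.prefix_nil.mp hu]
  | succ n ih =>
    intro v hvT hv u hu
    rcases eq_or_ne u v with rfl | hne
    · exact le_refl _
    · have hvne : v ≠ [] := by intro h; rw [h] at hv; simp at hv
      have hvdl : v.dropLast ++ [v.getLast hvne] = v := List.dropLast_append_getLast hvne
      have hdT : v.dropLast ∈ T := hpref v hvT _ ⟨[v.getLast hvne], hvdl⟩
      have hlen : u.length < v.length := by
        rcases lt_or_eq_of_le hu.length_le with h | h
        · exact h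
        · exact absurd (List.IsPrefix.eq_of_length hu h) hne
      have hupre : u <+: v.dropLast := by
        apply List.prefix_of_prefix_length_le hu ⟨[v.getLast hvne], hvdl⟩
        simp [List.length_dropLast]
        omega
      have h1 : Δ v ≤ Δ v.dropLast / k := by
        have := hHST v.dropLast hdT (v.getLast hvne) (by rw [hvdl]; exact hvT)
        rw [hvdl] at this; exact this
      have h2 : Δ v.dropLast / k ≤ Δ v.dropLast :=
        div_le_self (hΔpos _ hdT) hk
      have h3 : Δ v.dropLast ≤ Δ u := ih v.dropLast hdT (by simp [hv]) u hupre
      linarith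
    
lemma delta_strict (hk : 1 ≤ k)
    (hpref : ∀ v ∈ T, ∀ u : List ℕ, u <+: v → u ∈ T)
    (hΔpos : ∀ v ∈ T, 0 ≤ Δ v)
    (hHST : ∀ v ∈ T, ∀ i : ℕ, v ++ [i] ∈ T → Δ (v ++ [i]) ≤ Δ v / k)
    {u v : List ℕ} (huT : u ∈ T) (hvT : v ∈ T)
    (hpre : u <+: v) (hlen : u.length < v.length) : Δ v ≤ Δ u / k := by
  have hu : u = v.take u.length := List.prefix_iff_eq_take.mp hpre
  have hchild : u ++ [v.get ⟨u.length, hlen⟩] = v.take (u.length + 1) := by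
    rw [← List.take_concat_get hlen, List.concat_eq_append, ← hu]; rfl
  have hcT : v.take (u.length + 1) ∈ T := hpref v hvT _ (List.take_prefix _ _)
  have h1 : Δ (v.take (u.length + 1)) ≤ Δ u / k := by
    rw [← hchild]
    exact hHST u huT _ (hchild ▸ hcT)
  have h2 : Δ v ≤ Δ (v.take (u.length + 1)) :=
    delta_mono hk hpref hΔpos hHST v.length v hvT rfl _ (List.take_prefix _ _)
  linarith

end

lemma leaf_lcp {T : Finset (List ℕ)}
    (hpref : ∀ v ∈ T, ∀ u : List ℕ, u <+: v → u ∈ T)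
    (hincr : ∀ v ∈ T, ∀ i j : ℕ, v ++ [i] ∈ T → v ++ [j] ∈ T →
      (∃ i' : ℕ, v ++ [i] ++ [i'] ∈ T) → (∃ j' : ℕ, v ++ [j] ++ [j'] ∈ T) → i = j)
    {x y : List ℕ} (hxT : x ∈ T) (hyT : y ∈ T)
    (hxleaf : ∀ i, x ++ [i] ∉ T) (hxne : x ≠ [])
    (hlen : x.length ≤ y.length) (hne : x ≠ y) :
    lcp x y = x.dropLast := by
  obtain ⟨n, hn⟩ : ∃ n, x.length = n + 1 := by
    cases hx : x.length with
    | zero => exact absurd (List.length_eq_zero_iff.mp hx) hxne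
    | succ n => exact ⟨n, rfl⟩
  have hxdl : x.dropLast ++ [x.getLast hxne] = x := List.dropLast_append_getLast hxne
  have hpxT : x.dropLast ∈ T := hpref x hxT _ ⟨_, hxdl⟩
  have hpxlen : x.dropLast.length = n := by simp [hn]
  have hnylt : n < y.length := by omega
  have hqT : y.take n ∈ T := hpref y hyT _ (List.take_prefix _ _)
  have hqchild : y.take n ++ [y.get ⟨n, hnylt⟩] = y.take (n + 1) := by
    rw [← List.take_concat_get hnylt]; simp [List.concat_eq_append]
  have hqcT : y.take (n + 1) ∈ T := hpref y hyT _ (List.take_prefix _ _)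
  have hqint : ∃ i, y.take n ++ [i] ∈ T := ⟨_, hqchild ▸ hqcT⟩
  have hpxint : ∃ i, x.dropLast ++ [i] ∈ T := ⟨_, hxdl ▸ hxT⟩
  have hqeq : x.dropLast = y.take n :=
    uniq_internal hpref hincr n _ _ hpxT hqT hpxint hqint hpxlen
      (by simp [le_of_lt hnylt])
  have hc : x.getLast hxne ≠ y.get ⟨n, hnylt⟩ := by
    intro heq
    have hxy : y.take (n + 1) = x := by rw [← hqchild, ← heq, ← hqeq, hxdl]
    rcases lt_or_eq_of_le (show n + 1 ≤ y.length by omega) with h | h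
    · have h2 : y.take (n + 1) ++ [y.get ⟨n + 1, h⟩] = y.take (n + 2) := by
        rw [← List.take_concat_get h]; simp [List.concat_eq_append]
      have : x ++ [y.get ⟨n + 1, h⟩] ∈ T := by
        rw [← hxy, h2]; exact hpref y hyT _ (List.take_prefix _ _)
      exact hxleaf _ this
    · rw [h, List.take_length] at hxy
      exact hne hxy.symm
  have hy2 : y = x.dropLast ++ (y.get ⟨n, hnylt⟩ :: y.drop (n + 1)) := by
    conv_lhs => rw [← List.take_append_drop (n + 1) y]
    rw [← hqchild, hqeq, List.append_assoc]
    rfl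
  have hx2 : x = x.dropLast ++ [x.getLast hxne] := hxdl.symm
  conv_lhs => rw [hx2, hy2]
  rw [lcp_append, lcp_cons_ne _ _ hc, List.append_nil]


/-- every `m`-point `k`-increasing metric space — a `k`-HST (encoded as
a prefix-closed finite set `T` of paths with labels `Δ`, metric `Δ ∘ lca` on the set
of leaves, with `m` leaves) in which each vertex has at most one non-leaf child —
contains, isometrically, either an equilateral subspace of at least `√m` points or a
`k`-lacunary subspace of at least `√m` points. -/
theorem stmt_16 (k : ℝ) (hk : 1 ≤ k) (m : ℕ)
    (T : Finset (List ℕ)) (hroot : [] ∈ T)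
    (hpref : ∀ v ∈ T, ∀ u : List ℕ, u <+: v → u ∈ T)
    (Δ : List ℕ → ℝ)
    (hΔpos : ∀ v ∈ T, 0 ≤ Δ v)
    (hΔ0 : ∀ v ∈ T, (Δ v = 0 ↔ ∀ i : ℕ, v ++ [i] ∉ T))
    (hHST : ∀ v ∈ T, ∀ i : ℕ, v ++ [i] ∈ T → Δ (v ++ [i]) ≤ Δ v / k)
    (hincr : ∀ v ∈ T, ∀ i j : ℕ, v ++ [i] ∈ T → v ++ [j] ∈ T →
      (∃ i' : ℕ, v ++ [i] ++ [i'] ∈ T) → (∃ j' : ℕ, v ++ [j] ++ [j'] ∈ T) → i = j)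
    (hm : m = Set.ncard {v : List ℕ | v ∈ T ∧ ∀ i : ℕ, v ++ [i] ∉ T}) :
    ∃ S : Finset (List ℕ),
      (∀ v ∈ S, v ∈ T ∧ ∀ i : ℕ, v ++ [i] ∉ T) ∧
      Real.sqrt m ≤ (S.card : ℝ) ∧
      ((∃ c : ℝ, ∀ x ∈ S, ∀ y ∈ S, x ≠ y → Δ (lcp x y) = c) ∨
       (∃ g : ℕ → List ℕ,
          (∀ i, i < S.card → g i ∈ S) ∧
          (∀ i j, i < j → j < S.card → g i ≠ g j) ∧
          ∃ a : ℕ → ℝ, (∀ i, i < S.card → 0 < a i) ∧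
            (∀ i j, i ≤ j → j < S.card → a j ≤ a i) ∧
            (∀ i, i + 1 < S.card → a (i + 1) ≤ a i / k) ∧
            (∀ i j, i < j → j < S.card → Δ (lcp (g i) (g j)) = a i))) := by
  classical
  set leaves : Finset (List ℕ) := T.filter (fun v => ∀ i : ℕ, v ++ [i] ∉ T) with hldef
  have hleaves : ∀ v, v ∈ leaves ↔ v ∈ T ∧ ∀ i : ℕ, v ++ [i] ∉ T := by
    intro v; simp [hldef]
  have hmcard : m = leaves.card := by
    rw [hm, ← Set.ncard_coe_finset]
    congr 1
    ext v; simp [hleaves]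
  -- positivity of Δ at internal vertices
  have hpos : ∀ v ∈ T, (∃ i, v ++ [i] ∈ T) → 0 < Δ v := by
    rintro v hv ⟨i, hi⟩
    rcases lt_or_eq_of_le (hΔpos v hv) with h | h
    · exact h
    · exact absurd hi (((hΔ0 v hv).mp h.symm) i)
  -- facts about parents of nonempty leaves
  have hint : ∀ x ∈ leaves, ∀ (hx : x ≠ []),
      x.dropLast ∈ T ∧ (∃ i, x.dropLast ++ [i] ∈ T) := by
    intro x hx hxne
    have hxT := ((hleaves x).mp hx).1
    have hxdl := List.dropLast_append_getLast hxne
    exact ⟨hpref x hxT _ ⟨_, hxdl⟩, ⟨_, hxdl ▸ hxT⟩⟩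
  rcases Nat.eq_zero_or_pos m with hm0 | hmpos
  · exact ⟨∅, by simp, by simp [hm0], Or.inl ⟨0, by simp⟩⟩
  have hlnonempty : leaves.Nonempty := by
    rw [← Finset.card_pos, ← hmcard]; exact hmpos
  rcases Nat.lt_or_ge m 2 with hm1 | hm2
  · -- m = 1
    obtain ⟨x0, hx0⟩ := hlnonempty
    refine ⟨{x0}, ?_, ?_, Or.inl ⟨0, ?_⟩⟩
    · intro v hv; rw [Finset.mem_singleton] at hv; subst hv; exact (hleaves _).mp hx0
    · have h1 : m = 1 := by omega
      simp [h1]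
    · intro x hx y hy hxy
      simp only [Finset.mem_singleton] at hx hy
      subst hx; subst hy; exact absurd rfl hxy
  -- m ≥ 2 : all leaves are nonempty lists
  have hnil : ∀ x ∈ leaves, x ≠ [] := by
    intro x hx hxnil
    have hTsub : ∀ v ∈ T, v = [] := by
      intro v hvT
      by_contra hvne
      have hhead : [v.head hvne] ∈ T :=
        hpref v hvT _ ⟨v.tail, by rw [List.singleton_append]; exact List.cons_head_tail hvne⟩
      subst hxnil
      exact ((hleaves _).mp hx).2 (v.head hvne) (by simpa using hhead)
    have hsub : leaves ⊆ {[]} := by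
      intro v hv; rw [Finset.mem_singleton]; exact hTsub v ((hleaves v).mp hv).1
    have := Finset.card_le_card hsub
    simp only [Finset.card_singleton] at this
    omega
  -- counting
  set I : Finset ℕ := leaves.image List.length with hIdef
  set fib : ℕ → Finset (List ℕ) := fun n => leaves.filter (fun x => x.length = n) with hfibdef
  have hsum : leaves.card = ∑ n ∈ I, (fib n).card :=
    Finset.card_eq_sum_card_fiberwise (fun x hx => Finset.mem_image_of_mem _ hx)
  have hInonempty : I.Nonempty := hlnonempty.image _
  obtain ⟨n0, hn0I, hn0max⟩ := Finset.exists_max_image I (fun n => (fib n).card) hInonempty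
  set L := I.card with hLdef
  set B := (fib n0).card with hBdef
  have hLB : m ≤ L * B := by
    rw [hmcard, hsum]
    calc ∑ n ∈ I, (fib n).card ≤ ∑ _n ∈ I, B := Finset.sum_le_sum (fun n hn => hn0max n hn)
      _ = L * B := by rw [Finset.sum_const, smul_eq_mul]
  have hsqrt : Real.sqrt m ≤ ((max L B : ℕ) : ℝ) := by
    have h2 : (m : ℝ) ≤ ((max L B : ℕ) : ℝ) ^ 2 := by
      have h1 : m ≤ (max L B) * (max L B) :=
        le_trans hLB (Nat.mul_le_mul (le_max_left _ _) (le_max_right _ _))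
      calc (m : ℝ) ≤ (((max L B) * (max L B) : ℕ) : ℝ) := Nat.cast_le.mpr h1
        _ = _ := by push_cast; ring
    calc Real.sqrt m ≤ Real.sqrt (((max L B : ℕ) : ℝ) ^ 2) := Real.sqrt_le_sqrt h2
      _ = _ := Real.sqrt_sq (by positivity)
  -- facts about members of fibers
  have hfibmem : ∀ n, ∀ x ∈ fib n, x ∈ leaves ∧ x.length = n := by
    intro n x hx; exact Finset.mem_filter.mp hx
  rcases le_total L B with hcase | hcase
  · -- equilateral case : B is the max
    obtain ⟨x0, hx0⟩ : (fib n0).Nonempty := by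
      obtain ⟨x, hx, hxl⟩ := Finset.mem_image.mp hn0I
      exact ⟨x, Finset.mem_filter.mpr ⟨hx, hxl⟩⟩
    obtain ⟨hx0l, hx0len⟩ := hfibmem n0 x0 hx0
    refine ⟨fib n0, ?_, ?_, Or.inl ⟨Δ (x0.dropLast), ?_⟩⟩
    · intro v hv; exact (hleaves v).mp (hfibmem n0 v hv).1
    · rw [max_eq_right hcase] at hsqrt; exact hsqrt
    · intro x hx y hy hxy
      obtain ⟨hxl, hxlen⟩ := hfibmem n0 x hx
      obtain ⟨hyl, hylen⟩ := hfibmem n0 y hy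
      have hxne := hnil x hxl
      have hyne := hnil y hyl
      have hxT := ((hleaves x).mp hxl).1
      have hyT := ((hleaves y).mp hyl).1
      have hlcp : lcp x y = x.dropLast :=
        leaf_lcp hpref hincr hxT hyT ((hleaves x).mp hxl).2 hxne
          (by rw [hxlen, hylen]) hxy
      have hdx := hint x hxl hxne
      have hdx0 := hint x0 hx0l (hnil x0 hx0l)
      have : x.dropLast = x0.dropLast := by
        apply uniq_internal hpref hincr (n0 - 1) _ _ hdx.1 hdx0.1 hdx.2 hdx0.2 <;>
          simp [List.length_dropLast, hxlen, hx0len]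
      rw [hlcp, this]
  · -- lacunary case : L is the max
    have hch : ∀ n ∈ I, ∃ x, x ∈ leaves ∧ x.length = n := by
      intro n hn
      obtain ⟨x, hx, hxl⟩ := Finset.mem_image.mp hn
      exact ⟨x, hx, hxl⟩
    set ℓ : ℕ → List ℕ :=
      fun n => if h : ∃ x, x ∈ leaves ∧ x.length = n then h.choose else [] with hℓdef
    have hℓ : ∀ n ∈ I, ℓ n ∈ leaves ∧ (ℓ n).length = n := by
      intro n hn
      have h := hch n hn
      simp only [hℓdef, dif_pos h]
      exact h.choose_spec
    set S : Finset (List ℕ) := I.image ℓ with hSdef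
    have hScard : S.card = L := by
      rw [hSdef]
      refine Finset.card_image_of_injOn (fun n hn n' hn' h => ?_)
      rw [← (hℓ n hn).2, ← (hℓ n' hn').2, h]
    set lst := I.sort (· ≤ ·) with hlstdef
    have hlst : lst.length = L := Finset.length_sort _
    set g : ℕ → List ℕ := fun i => ℓ (lst.getD i 0) with hgdef
    have hmemI : ∀ i, i < L → lst.getD i 0 ∈ I := by
      intro i h
      rw [List.getD_eq_getElem lst 0 (by rw [hlst]; exact h)]
      exact (Finset.mem_sort _).mp (List.getElem_mem _)
    have hmono : ∀ i j, i < j → j < L → lst.getD i 0 < lst.getD j 0 := by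
      intro i j hij hj
      have hi' : i < lst.length := by rw [hlst]; omega
      have hj' : j < lst.length := by rw [hlst]; exact hj
      rw [List.getD_eq_getElem lst 0 hi', List.getD_eq_getElem lst 0 hj']
      exact List.Pairwise.rel_get_of_lt (Finset.sortedLT_sort I).pairwise
        (show (⟨i, hi'⟩ : Fin lst.length) < ⟨j, hj'⟩ from hij)
    -- facts about g
    have hgfacts : ∀ i, i < L → g i ∈ leaves ∧ (g i).length = lst.getD i 0 := by
      intro i h; exact hℓ _ (hmemI i h)
    refine ⟨S, ?_, ?_, Or.inr ⟨g, ?_, ?_, fun i => Δ ((g i).dropLast), ?_, ?_, ?_, ?_⟩⟩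
    · intro v hv
      obtain ⟨n, hn, hvn⟩ := Finset.mem_image.mp hv
      exact (hleaves v).mp (hvn ▸ (hℓ n hn).1)
    · rw [hScard]; rwa [max_eq_left hcase] at hsqrt
    · intro i hi
      rw [hScard] at hi
      exact Finset.mem_image_of_mem ℓ (hmemI i hi)
    · intro i j hij hj
      rw [hScard] at hj
      intro heq
      have := hmono i j hij hj
      have h1 := (hgfacts i (lt_trans hij hj)).2
      have h2 := (hgfacts j hj).2
      rw [heq, h2] at h1
      omega
    · -- positivity
      intro i hi
      rw [hScard] at hi
      obtain ⟨hgl, _⟩ := hgfacts i hi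
      have h := hint _ hgl (hnil _ hgl)
      exact hpos _ h.1 h.2
    · -- antitone
      intro i j hij hj
      rw [hScard] at hj
      rcases eq_or_lt_of_le hij with rfl | hlt
      · exact le_refl _
      · obtain ⟨hgi, hgilen⟩ := hgfacts i (lt_trans hlt hj)
        obtain ⟨hgj, hgjlen⟩ := hgfacts j hj
        have hdi := hint _ hgi (hnil _ hgi)
        have hdj := hint _ hgj (hnil _ hgj)
        have hlenlt : (g i).dropLast.length < (g j).dropLast.length := by
          have h1 : 1 ≤ (g i).length := by
            cases h : (g i) with
            | nil => exact absurd h (hnil _ hgi)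
            | cons a l => simp [h]
          have := hmono i j hlt hj
          simp only [List.length_dropLast]
          omega
        have hpre : (g i).dropLast <+: (g j).dropLast :=
          internal_prefix hpref hincr hdi.1 hdj.1 hdi.2 hdj.2 (le_of_lt hlenlt)
        have := delta_strict hk hpref hΔpos hHST hdi.1 hdj.1 hpre hlenlt
        have hp := hpos _ hdi.1 hdi.2
        calc Δ ((g j).dropLast) ≤ Δ ((g i).dropLast) / k := this
          _ ≤ Δ ((g i).dropLast) := div_le_self hp.le hk
    · -- ratio
      intro i hi
      rw [hScard] at hi
      obtain ⟨hgi, hgilen⟩ := hgfacts i (by omega)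
      obtain ⟨hgj, hgjlen⟩ := hgfacts (i + 1) hi
      have hdi := hint _ hgi (hnil _ hgi)
      have hdj := hint _ hgj (hnil _ hgj)
      have hlenlt : (g i).dropLast.length < (g (i + 1)).dropLast.length := by
        have h1 : 1 ≤ (g i).length := by
          cases h : (g i) with
          | nil => exact absurd h (hnil _ hgi)
          | cons a l => simp [h]
        have := hmono i (i + 1) (by omega) hi
        simp only [List.length_dropLast]
        omega
      have hpre : (g i).dropLast <+: (g (i + 1)).dropLast :=
        internal_prefix hpref hincr hdi.1 hdj.1 hdi.2 hdj.2 (le_of_lt hlenlt)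
      exact delta_strict hk hpref hΔpos hHST hdi.1 hdj.1 hpre hlenlt
    · -- distances
      intro i j hij hj
      rw [hScard] at hj
      obtain ⟨hgi, hgilen⟩ := hgfacts i (lt_trans hij hj)
      obtain ⟨hgj, hgjlen⟩ := hgfacts j hj
      have hlt := hmono i j hij hj
      have hne : g i ≠ g j := by
        intro heq; rw [heq, hgjlen] at hgilen; omega
      rw [leaf_lcp hpref hincr ((hleaves _).mp hgi).1 ((hleaves _).mp hgj).1
        ((hleaves _).mp hgi).2 (hnil _ hgi)
        (by rw [hgilen, hgjlen]; omega) hne]
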